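/- Let V be a finite-dimensional real vector space, F ⊆ V a subspace, and ω a skew-symmetric bilinear form on F. Then D_{F,ω} = {(u,α) ∈ V ⊕ V* | u ∈ F and α(v) = ω(u,v) for all v ∈ F} is a linear Dirac structure on V. Moreover, its projection onto V equals F, and the induced form ω_D on F defined by ω_D(u,v) = α(v) for (u,α) ∈ D agrees with ω. -/
import Mathlib


/-- The orthogonal of a subspace of `V ⊕ V*` with respect to the symmetric pairing
`⟪(v₁,α₁),(v₂,α₂)⟫ = α₁(v₂) + α₂(v₁)`. -/
def diracOrtho {V : Type*} [AddCommGroup V] [Module ℝ V]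
    (U : Submodule ℝ (V × Module.Dual ℝ V)) :
    Submodule ℝ (V × Module.Dual ℝ V) where
  carrier := {p | ∀ q ∈ U, p.2 q.1 + q.2 p.1 = 0}
  add_mem' := by
    intro a b ha hb q hq
    have h1 := ha q hq
    have h2 := hb q hq
    simp only [Prod.fst_add, Prod.snd_add, LinearMap.add_apply, map_add] at *
    linarith
  zero_mem' := by intro q hq; simp
  smul_mem' := by
    intro c a ha q hq
    have h1 := ha q hq
    simp only [Prod.smul_fst, Prod.smul_snd, LinearMap.smul_apply, map_smul,
      smul_eq_mul] at *
    linear_combination c * h1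


/-- The subspace `D_{F,ω} = {(u,α) | u ∈ F, α(v) = ω(u,v) ∀ v ∈ F}` determined by a
subspace `F ⊆ V` and a bilinear form `ω` on `F` (given as `L : F →ₗ F*`). -/
def DFomega {V : Type*} [AddCommGroup V] [Module ℝ V] (F : Submodule ℝ V)
    (L : F →ₗ[ℝ] Module.Dual ℝ F) : Submodule ℝ (V × Module.Dual ℝ V) where
  carrier := {p | ∃ hu : p.1 ∈ F, ∀ v : F, p.2 v = L ⟨p.1, hu⟩ v}
  zero_mem' := ⟨F.zero_mem, by intro v; simp [show ((⟨(0:V), F.zero_mem⟩ : F)) = 0 from rfl]⟩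
  add_mem' := by
    rintro a b ⟨ha, hA⟩ ⟨hb, hB⟩
    refine ⟨F.add_mem ha hb, fun v => ?_⟩
    have key : (⟨(a + b).1, F.add_mem ha hb⟩ : F) = ⟨a.1, ha⟩ + ⟨b.1, hb⟩ := rfl
    simp only [Prod.snd_add, LinearMap.add_apply, hA v, hB v, key, map_add]
  smul_mem' := by
    rintro c a ⟨ha, hA⟩
    refine ⟨F.smul_mem c ha, fun v => ?_⟩
    have key : (⟨(c • a).1, F.smul_mem c ha⟩ : F) = c • (⟨a.1, ha⟩ : F) := rfl
    simp only [Prod.smul_snd, LinearMap.smul_apply, hA v, key, map_smul, smul_eq_mul]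

/-- `D_{F,ω}` is a linear Dirac structure whose projection to `V` is `F` and whose
induced two-form on `F` agrees with `ω`. -/
theorem stmt4 {V : Type*} [AddCommGroup V] [Module ℝ V] [FiniteDimensional ℝ V]
    (F : Submodule ℝ V) (L : F →ₗ[ℝ] Module.Dual ℝ F)
    (hskew : ∀ u v : F, L u v = - L v u) :
    diracOrtho (DFomega F L) = DFomega F L ∧
    Submodule.map (LinearMap.fst ℝ V (Module.Dual ℝ V)) (DFomega F L) = F ∧
    ∀ p ∈ DFomega F L, ∀ (hu : p.1 ∈ F) (v : F), p.2 v = L ⟨p.1, hu⟩ v := by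
  refine ⟨?_, ?_, ?_⟩
  · ext p
    constructor
    · intro hp
      have hp' : ∀ q ∈ DFomega F L, p.2 q.1 + q.2 p.1 = 0 := hp
      have hu : p.1 ∈ F := by
        by_contra hnm
        obtain ⟨f, hf0, hfbot⟩ := F.exists_dual_map_eq_bot_of_notMem hnm inferInstance
        have hq : ((0 : V), f) ∈ DFomega F L := by
          refine ⟨F.zero_mem, fun v => ?_⟩
          have hv : f v.1 = 0 := by
            have : f v.1 ∈ F.map f := Submodule.mem_map_of_mem v.2
            rwa [hfbot, Submodule.mem_bot] at this
          simp [hv, show ((⟨(0:V), F.zero_mem⟩ : F)) = 0 from rfl]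
        have := hp' _ hq
        simp only [map_zero, zero_add] at this
        exact hf0 this
      refine ⟨hu, fun v => ?_⟩
      obtain ⟨g, hg⟩ := LinearMap.exists_extend (L v)
      have hq : ((v : V), g) ∈ DFomega F L := by
        refine ⟨v.2, fun w => ?_⟩
        have h1 : g w.1 = L v w := LinearMap.congr_fun hg w
        have h2 : (⟨(v : V), v.2⟩ : F) = v := rfl
        rw [h1, h2]
      have hpq := hp' _ hq
      have h3 : g p.1 = L v ⟨p.1, hu⟩ := LinearMap.congr_fun hg ⟨p.1, hu⟩
      rw [h3] at hpq
      rw [hskew ⟨p.1, hu⟩ v]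
      linarith
    · rintro ⟨hu, hA⟩ q ⟨hq, hB⟩
      have h1 : p.2 q.1 = L ⟨p.1, hu⟩ ⟨q.1, hq⟩ := hA ⟨q.1, hq⟩
      have h2 : q.2 p.1 = L ⟨q.1, hq⟩ ⟨p.1, hu⟩ := hB ⟨p.1, hu⟩
      rw [h1, h2, hskew ⟨p.1, hu⟩ ⟨q.1, hq⟩]
      ring
  · ext u
    simp only [Submodule.mem_map, LinearMap.fst_apply]
    constructor
    · rintro ⟨p, ⟨hu, -⟩, rfl⟩; exact hu
    · intro hu
      obtain ⟨g, hg⟩ := LinearMap.exists_extend (L ⟨u, hu⟩)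
      exact ⟨(u, g), ⟨hu, fun v => LinearMap.congr_fun hg v⟩, rfl⟩
  · rintro p ⟨hu', hA⟩ hu v
    have h : (⟨p.1, hu⟩ : F) = ⟨p.1, hu'⟩ := rfl
    rw [h]; exact hA v
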